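/- Let k be an algebraically closed field, let f_1,…,f_s ∈ k[x_1,…,x_n], and let I = ⟨f_1,…,f_s⟩. Then 1 ∈ I + ⟨∂f_i/∂x_j : 1 ≤ i ≤ s, 1 ≤ j ≤ n⟩ if and only if there is no point p ∈ kⁿ with I ⊆ m_p². Equivalently, the order of I is at most one at every point of kⁿ if and only if the ideal Δ(I) generated by the f_i and all their first partial derivatives is the unit ideal. -/

import Mathlib

open MvPolynomial

/-- The maximal ideal of `k[x_1,…,x_n]` of polynomials vanishing at the point `p`,
i.e. the kernel of the evaluation map at `p` (equivalently `⟨x_1 - p_1, …, x_n - p_n⟩`). -/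
noncomputable def mP {k : Type} [Field k] {n : ℕ} (p : Fin n → k) :
    Ideal (MvPolynomial (Fin n) k) :=
  RingHom.ker (eval p)

lemma mem_mP {k : Type} [Field k] {n : ℕ} (p : Fin n → k) (g : MvPolynomial (Fin n) k) :
    g ∈ mP p ↔ eval p g = 0 := Iff.rfl

lemma sub_C_eval_mem_span {k : Type} [Field k] {n : ℕ} (p : Fin n → k)
    (g : MvPolynomial (Fin n) k) :
    g - C (eval p g) ∈ Ideal.span (Set.range fun i => X i - C (p i)) := by
  induction g using MvPolynomial.induction_on with
  | C a => simp
  | add g h hg hh =>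
    have : g + h - C (eval p (g + h)) = (g - C (eval p g)) + (h - C (eval p h)) := by
      rw [map_add, map_add]; ring
    rw [this]; exact Ideal.add_mem _ hg hh
  | mul_X g i hg =>
    have : g * X i - C (eval p (g * X i)) =
        g * (X i - C (p i)) + (g - C (eval p g)) * C (p i) := by
      rw [map_mul, map_mul, eval_X]; ring
    rw [this]
    exact Ideal.add_mem _
      (Ideal.mul_mem_left _ _ (Ideal.subset_span ⟨i, rfl⟩))
      (Ideal.mul_mem_right _ _ hg)

lemma mP_eq_span {k : Type} [Field k] {n : ℕ} (p : Fin n → k) :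
    mP p = Ideal.span (Set.range fun i => X i - C (p i)) := by
  apply le_antisymm
  · intro g hg
    have := sub_C_eval_mem_span p g
    rwa [(mem_mP p g).mp hg, map_zero, sub_zero] at this
  · rw [Ideal.span_le]
    rintro _ ⟨i, rfl⟩
    simp [mem_mP]

lemma mem_mP_sq_iff {k : Type} [Field k] {n : ℕ} (p : Fin n → k)
    (g : MvPolynomial (Fin n) k) :
    g ∈ (mP p) ^ 2 ↔ eval p g = 0 ∧ ∀ j, eval p (pderiv j g) = 0 := by
  constructor
  · intro hg
    have hgm : g ∈ mP p := Ideal.pow_le_self two_ne_zero hg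
    refine ⟨hgm, fun j => ?_⟩
    rw [pow_two] at hg
    refine Submodule.mul_induction_on hg (fun a ha b hb => ?_) (fun x y hx hy => ?_)
    · rw [pderiv_mul, map_add, map_mul, map_mul,
        (mem_mP p a).mp ha, (mem_mP p b).mp hb, mul_zero, zero_mul, add_zero]
    · rw [map_add, map_add, hx, hy, add_zero]
  · rintro ⟨h0, hd⟩
    have hg : g ∈ mP p := h0
    rw [mP_eq_span] at hg
    rw [Ideal.span, Submodule.mem_span_range_iff_exists_fun] at hg
    obtain ⟨c, hc⟩ := hg
    have hcj : ∀ j, eval p (c j) = 0 := by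
      intro j
      have := congrArg (fun q => eval p (pderiv j q)) hc
      simp only [map_sum, smul_eq_mul, map_mul, map_add, map_sub, pderiv_X, pderiv_C,
        eval_X, eval_C, sub_self, map_zero, sub_zero] at this
      rw [hd j] at this
      rw [← this]
      rw [Finset.sum_eq_single j]
      · simp [Pi.single_eq_same]
      · intro i _ hij
        simp [Pi.single_eq_of_ne hij]
      · simp
    rw [← hc, pow_two]
    refine Ideal.sum_mem _ fun i _ => ?_
    rw [smul_eq_mul]
    exact Ideal.mul_mem_mul (hcj i) (by simp [mem_mP])

/-- Over an algebraically closed field, `1 ∈ Δ(I) = I + ⟨∂f_i/∂x_j⟩` if and only if there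
is no point `p ∈ kⁿ` with `I ⊆ m_p²`, i.e. the order of `I` is at most one everywhere. -/
theorem delta_eq_top_iff_order_le_one {k : Type} [Field k] [IsAlgClosed k] {n s : ℕ}
    (f : Fin s → MvPolynomial (Fin n) k) :
    (1 : MvPolynomial (Fin n) k) ∈
        Ideal.span (Set.range f) +
          Ideal.span (Set.range fun ij : Fin s × Fin n => pderiv ij.2 (f ij.1)) ↔
      ¬ ∃ p : Fin n → k, Ideal.span (Set.range f) ≤ (mP p) ^ 2 := by
  set J := Ideal.span (Set.range f) +
      Ideal.span (Set.range fun ij : Fin s × Fin n => pderiv ij.2 (f ij.1)) with hJ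
  constructor
  · rintro h1 ⟨p, hp⟩
    have hJle : J ≤ mP p := by
      rw [hJ]
      apply sup_le
      · rw [Ideal.span_le]
        rintro _ ⟨i, rfl⟩
        exact ((mem_mP_sq_iff p (f i)).mp (hp (Ideal.subset_span ⟨i, rfl⟩))).1
      · rw [Ideal.span_le]
        rintro _ ⟨⟨i, j⟩, rfl⟩
        exact ((mem_mP_sq_iff p (f i)).mp (hp (Ideal.subset_span ⟨i, rfl⟩))).2 j
    have := hJle h1
    rw [mem_mP, map_one] at this
    exact one_ne_zero this
  · intro h
    by_contra h1
    apply h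
    have hrad : (1 : MvPolynomial (Fin n) k) ∉ J.radical := by
      intro hr
      obtain ⟨m, hm⟩ := hr
      rw [one_pow] at hm
      exact h1 hm
    rw [← vanishingIdeal_zeroLocus_eq_radical (K := k)] at hrad
    have hne : (zeroLocus k J).Nonempty := by
      by_contra hne
      rw [Set.not_nonempty_iff_eq_empty] at hne
      rw [hne, vanishingIdeal_empty] at hrad
      exact hrad trivial
    obtain ⟨p, hpz⟩ := hne
    refine ⟨p, ?_⟩
    rw [Ideal.span_le]
    rintro _ ⟨i, rfl⟩
    rw [SetLike.mem_coe, mem_mP_sq_iff]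
    rw [mem_zeroLocus_iff] at hpz
    constructor
    · exact hpz _ (Ideal.mem_sup_left (Ideal.subset_span ⟨i, rfl⟩))
    · intro j
      exact hpz _ (Ideal.mem_sup_right (Ideal.subset_span ⟨(i, j), rfl⟩))
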